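/- arXiv:2006.12002 — 5 statements merged into one kernel-verified Lean document; each statement's English description precedes it below -/
import Mathlib

section
/- Let G : ℕ → ZMod m be periodic with minimal period p, and let s be the additive order of SG_{p-1} = ∑_{k=0}^{p-1} G_k in ZMod m (with s = 1 if SG_{p-1} = 0). Then the partial sum sequence SG_n = ∑_{k=0}^n G_k has minimal period s · p. -/
theorem stmt_5 (m : ℕ) (hm : 2 ≤ m) (G : ℕ → ZMod m) (p : ℕ) (hp : 0 < p)
    (hper : ∀ n, G (n + p) = G n)
    (hmin : ∀ q, 0 < q → (∀ n, G (n + q) = G n) → p ≤ q)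
    (s : ℕ) (hs : s = addOrderOf (∑ k ∈ Finset.range p, G k)) :
    (∀ n, ∑ k ∈ Finset.range (n + s * p + 1), G k = ∑ k ∈ Finset.range (n + 1), G k) ∧
    (∀ q, 0 < q → (∀ n, ∑ k ∈ Finset.range (n + q + 1), G k = ∑ k ∈ Finset.range (n + 1), G k) →
      s * p ≤ q) := by
  obtain ⟨p₀, rfl⟩ : ∃ p₀, p = p₀ + 1 := ⟨p - 1, (Nat.succ_pred_eq_of_pos hp).symm⟩
  set p := p₀ + 1 with hpdef
  set S := ∑ k ∈ Finset.range p, G k with hS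
  have hA : ∀ n, ∑ k ∈ Finset.range (n + p), G k = (∑ k ∈ Finset.range n, G k) + S := by
    intro n
    induction n with
    | zero => simp [hS]
    | succ n ih =>
      have h1 : n + 1 + p = (n + p) + 1 := by ring
      rw [h1, Finset.sum_range_succ, ih, hper, Finset.sum_range_succ]
      ring
  have hB : ∀ t n, ∑ k ∈ Finset.range (n + t * p), G k
      = (∑ k ∈ Finset.range n, G k) + t • S := by
    intro t
    induction t with
    | zero => simp
    | succ t ih =>
      intro n
      have h1 : n + (t + 1) * p = (n + t * p) + p := by ring
      rw [h1, hA, ih n, succ_nsmul]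
      abel
  have hGmul : ∀ t n, G (n + t * p) = G n := by
    intro t
    induction t with
    | zero => simp
    | succ t ih =>
      intro n
      have h1 : n + (t + 1) * p = (n + t * p) + p := by ring
      rw [h1, hper, ih]
  constructor
  · intro n
    have h1 : n + s * p + 1 = (n + 1) + s * p := by ring
    rw [h1, hB s (n + 1), hs, addOrderOf_nsmul_eq_zero, add_zero]
  · intro q hq hqper
    have hG1 : ∀ k, G (k + 1 + q) = G (k + 1) := by
      intro k
      have e1 := hqper (k + 1)
      have e2 := hqper k
      rw [show k + 1 + q + 1 = (k + q + 1) + 1 from by ring,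
        Finset.sum_range_succ (f := G) (n := k + q + 1),
        Finset.sum_range_succ (f := G) (n := k + 1), e2] at e1
      have := add_left_cancel e1
      rw [show k + 1 + q = k + q + 1 from by ring]
      exact this
    have hGq : ∀ n, G (n + q) = G n := by
      intro n
      cases n with
      | zero =>
        have h1 : G (p₀ + 1 + q) = G (p₀ + 1) := hG1 p₀
        have h2 : G (q + p) = G q := hper q
        have h3 : G (0 + p) = G 0 := hper 0
        rw [zero_add, ← h2, show q + p = p₀ + 1 + q from by rw [hpdef]; ring, h1,
          ← h3, zero_add, hpdef]
      | succ k => exact hG1 k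
    have hdvd : p ∣ q := by
      by_contra h
      have hr : q % p ≠ 0 := fun h0 => h (Nat.dvd_of_mod_eq_zero h0)
      have hrper : ∀ n, G (n + q % p) = G n := by
        intro n
        have h1 : G (n + q % p + (q / p) * p) = G (n + q % p) := hGmul _ _
        have h2 : n + q % p + (q / p) * p = n + q := by
          have h3 := Nat.div_add_mod q p
          rw [mul_comm] at h3
          omega
        rw [h2, hGq] at h1
        exact h1.symm
      have hle := hmin (q % p) (Nat.pos_of_ne_zero hr) hrper
      have hlt := Nat.mod_lt q hp
      omega
    obtain ⟨t, rfl⟩ := hdvd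
    have ht : 0 < t := by
      rcases Nat.eq_zero_or_pos t with h0 | h0
      · simp [h0] at hq
      · exact h0
    have hts : t • S = 0 := by
      have e1 := hqper p₀
      rw [show p₀ + p * t + 1 = p + t * p from by rw [hpdef]; ring, hB t p] at e1
      rw [show p₀ + 1 = p from rfl] at e1
      exact add_eq_left.mp e1
    have hst : s ≤ t := Nat.le_of_dvd ht (hs ▸ addOrderOf_dvd_of_nsmul_eq_zero hts)
    calc s * p ≤ t * p := Nat.mul_le_mul_right p hst
      _ = p * t := mul_comm _ _
end

section
/- Let m be a prime and G : ℕ → ZMod m periodic with minimal period p. If ∑_{k=0}^{p-1} G_k ≠ 0 in ZMod m, then the partial sum sequence SG_n = ∑_{k=0}^n G_k has minimal period m · p. -/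
theorem stmt_7 (m : ℕ) (hm : Nat.Prime m) (G : ℕ → ZMod m) (p : ℕ) (hp : 0 < p)
    (hper : ∀ n, G (n + p) = G n)
    (hmin : ∀ q, 0 < q → (∀ n, G (n + q) = G n) → p ≤ q)
    (hsum : ∑ k ∈ Finset.range p, G k ≠ 0) :
    (∀ n, ∑ k ∈ Finset.range (n + m * p + 1), G k = ∑ k ∈ Finset.range (n + 1), G k) ∧
    (∀ q, 0 < q → (∀ n, ∑ k ∈ Finset.range (n + q + 1), G k = ∑ k ∈ Finset.range (n + 1), G k) →
      m * p ≤ q) := by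
  have hF : Fact (Nat.Prime m) := ⟨hm⟩
  -- iterated periodicity
  have pmul : ∀ a n, G (n + a * p) = G n := by
    intro a
    induction a with
    | zero => simp
    | succ a ih =>
      intro n
      have : n + (a + 1) * p = (n + a * p) + p := by ring
      rw [this, hper, ih]
  -- sums of multiples of p blocks
  have multiple : ∀ a, ∑ k ∈ Finset.range (a * p), G k
      = a • (∑ k ∈ Finset.range p, G k) := by
    intro a
    induction a with
    | zero => simp
    | succ a ih =>
      have : (a + 1) * p = a * p + p := by ring
      rw [this, Finset.sum_range_add, ih, succ_nsmul]
      congr 1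
      apply Finset.sum_congr rfl
      intro i _
      rw [add_comm (a * p) i, pmul]
  -- shift sums by m*p
  have H : ∀ n, ∑ k ∈ Finset.range (n + m * p), G k = ∑ k ∈ Finset.range n, G k := by
    intro n
    induction n with
    | zero =>
      simp only [Nat.zero_add, Finset.range_zero, Finset.sum_empty]
      rw [multiple, nsmul_eq_mul, ZMod.natCast_self, zero_mul]
    | succ n ih =>
      have : n + 1 + m * p = (n + m * p) + 1 := by ring
      rw [this, Finset.sum_range_succ, ih, pmul, Finset.sum_range_succ]
  constructor
  · intro n
    have : n + m * p + 1 = (n + 1) + m * p := by ring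
    rw [this, H]
  · intro q hq hSq
    -- G is periodic with period q
    have hGq : ∀ n, G (n + q) = G n := by
      have step : ∀ n, G (n + 1 + q) = G (n + 1) := by
        intro n
        have h1 := hSq (n + 1)
        have h2 := hSq n
        have e1 : n + 1 + q + 1 = (n + q + 1) + 1 := by ring
        rw [e1, Finset.sum_range_succ, h2, Finset.sum_range_succ] at h1
        have e2 : n + 1 + 1 = (n + 1) + 1 := rfl
        rw [e2, Finset.sum_range_succ, Finset.sum_range_succ] at h1
        have : n + q + 1 = n + 1 + q := by ring
        rw [this] at h1
        exact add_left_cancel h1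
      intro n
      cases n with
      | zero =>
        have h1 : G (0 + q) = G (q + p) := by rw [Nat.zero_add, hper]
        have h2 : q + p = (p - 1) + 1 + q := by omega
        rw [h1, h2, step, show p - 1 + 1 = p by omega, ← Nat.zero_add p, hper]
      | succ n => exact step n
    -- p divides q
    have hdvd : p ∣ q := by
      by_contra hnd
      have hr : q % p ≠ 0 := fun h => hnd (Nat.dvd_of_mod_eq_zero h)
      have hrp : q % p < p := Nat.mod_lt _ hp
      have : ∀ n, G (n + q % p) = G n := by
        intro n
        have : n + q % p + q / p * p = n + q := by
          have := Nat.mod_add_div' q p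
          omega
        calc G (n + q % p) = G (n + q % p + q / p * p) := (pmul _ _).symm
          _ = G (n + q) := by rw [this]
          _ = G n := hGq n
      have := hmin (q % p) (Nat.pos_of_ne_zero hr) this
      omega
    obtain ⟨t, ht⟩ := hdvd
    have htpos : 0 < t := by
      rcases Nat.eq_zero_or_pos t with h | h
      · subst h; simp at ht; omega
      · exact h
    -- evaluate hSq at 0
    have h0 := hSq 0
    rw [Nat.zero_add, Finset.sum_range_succ, Finset.sum_range_one, ht,
      show p * t = t * p by ring, multiple,
      show t * p = 0 + t * p from (Nat.zero_add _).symm, pmul t 0] at h0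
    have hts : (t : ZMod m) * (∑ k ∈ Finset.range p, G k) = 0 := by
      rw [add_eq_right] at h0
      rwa [nsmul_eq_mul] at h0
    have htz : (t : ZMod m) = 0 := by
      rcases mul_eq_zero.mp hts with h | h
      · exact h
      · exact absurd h hsum
    have hmt : m ∣ t := (ZMod.natCast_eq_zero_iff t m).mp htz
    have : m ≤ t := Nat.le_of_dvd htpos hmt
    calc m * p ≤ t * p := Nat.mul_le_mul_right p this
      _ = q := by rw [ht, Nat.mul_comm]
end

section
/- Let F(a,b) be the generalized Fibonacci sequence modulo m with minimal period p. Then ∑_{k=0}^{p-1} F(a,b)_k = 0 in ZMod m. -/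
theorem stmt_10 (m : ℕ) (hm : 2 ≤ m) (a b : ZMod m) (F : ℕ → ZMod m)
    (hF0 : F 0 = a) (hF1 : F 1 = b)
    (hrec : ∀ n, F (n + 2) = F (n + 1) + F n)
    (p : ℕ) (hp : 0 < p)
    (hper : ∀ n, F (n + p) = F n)
    (hmin : ∀ q, 0 < q → (∀ n, F (n + q) = F n) → p ≤ q) :
    ∑ k ∈ Finset.range p, F k = 0 := by
  have h : ∀ k, F k = F (k + 1 + 1) - F (k + 1) := by
    intro k
    have := hrec k
    rw [show k + 2 = k + 1 + 1 from rfl] at this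
    rw [this]; ring
  calc ∑ k ∈ Finset.range p, F k
      = ∑ k ∈ Finset.range p, (F (k + 1 + 1) - F (k + 1)) :=
        Finset.sum_congr rfl fun k _ => h k
    _ = F (p + 1) - F (0 + 1) := Finset.sum_range_sub (fun k => F (k + 1)) p
    _ = 0 := by
        have := hper 1
        rw [show p + 1 = 1 + p from Nat.add_comm p 1, this, zero_add]
        ring
end

section
/- With S^i F(a,b) the i-th iterated partial sum of the generalized Fibonacci sequence over ℤ, we have S^3 F(a,b)_n = S^2 F(a,b)_{n+2} - (n+3)·a - ((n+2)(n+3)/2)·b for all n ≥ 0. -/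
theorem stmt_13 (a b : ℤ) (F : ℕ → ℤ)
    (hF0 : F 0 = a) (hF1 : F 1 = b)
    (hrec : ∀ n, F (n + 2) = F (n + 1) + F n)
    (S : ℕ → ℕ → ℤ)
    (hS0 : ∀ n, S 0 n = F n)
    (hS : ∀ i n, S (i + 1) n = ∑ k ∈ Finset.range (n + 1), S i k) :
    ∀ n : ℕ, S 3 n = S 2 (n + 2) - (n + 3) * a - ((n + 2) * (n + 3) / 2) * b := by
  have hstep : ∀ i n, S (i + 1) (n + 1) = S (i + 1) n + S i (n + 1) := by
    intro i n
    rw [hS, hS, Finset.sum_range_succ]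
  have h1 : ∀ n, S 1 n = F (n + 2) - b := by
    intro n
    induction n with
    | zero =>
      rw [hS, Finset.sum_range_one, hS0, hrec 0, hF0, hF1]; ring
    | succ n ih =>
      have e : S 1 (n + 1) = S 1 n + F (n + 1) := by rw [hstep 0 n, hS0]
      have r : F (n + 3) = F (n + 2) + F (n + 1) := hrec (n + 1)
      show S 1 (n + 1) = F (n + 3) - b
      rw [e, ih, r]; ring
  have h2 : ∀ n, S 2 n = S 1 (n + 2) - a - (n + 2) * b := by
    intro n
    induction n with
    | zero =>
      have e : S 2 0 = S 1 0 := by rw [hS, Finset.sum_range_one]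
      have r2 : F 4 = F 3 + F 2 := hrec 2
      have r1 : F 3 = F 2 + F 1 := hrec 1
      show S 2 0 = S 1 2 - a - ((0 : ℤ) + 2) * b
      rw [e, h1 0, h1 2]
      have r0 : F 2 = F 1 + F 0 := hrec 0
      show F 2 - b = F 4 - b - a - ((0 : ℤ) + 2) * b
      rw [r2, r1, r0, hF0, hF1]; ring
    | succ n ih =>
      have A : S 2 (n + 1) = S 2 n + S 1 (n + 1) := hstep 1 n
      have B : S 1 (n + 1) = F (n + 3) - b := h1 (n + 1)
      have C : S 1 (n + 2) = F (n + 4) - b := h1 (n + 2)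
      have D : S 1 (n + 3) = F (n + 5) - b := h1 (n + 3)
      have r : F (n + 5) = F (n + 4) + F (n + 3) := hrec (n + 3)
      show S 2 (n + 1) = S 1 (n + 3) - a - ((n : ℤ) + 1 + 2) * b
      rw [A, ih, B, C, D, r]
      push_cast; ring
  intro n
  induction n with
  | zero =>
    have e : S 3 0 = S 1 0 := by
      rw [hS, Finset.sum_range_one, hS, Finset.sum_range_one]
    have B : S 2 2 = S 1 4 - a - ((2 : ℤ) + 2) * b := by
      have := h2 2
      push_cast at this
      exact this
    have C : S 1 4 = F 6 - b := h1 4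
    have D : S 1 0 = F 2 - b := h1 0
    have r4 : F 6 = F 5 + F 4 := hrec 4
    have r3 : F 5 = F 4 + F 3 := hrec 3
    have r2 : F 4 = F 3 + F 2 := hrec 2
    have r1 : F 3 = F 2 + F 1 := hrec 1
    have r0 : F 2 = F 1 + F 0 := hrec 0
    show S 3 0 = S 2 2 - ((0 : ℤ) + 3) * a - (((0 : ℤ) + 2) * ((0 : ℤ) + 3) / 2) * b
    rw [e, B, C, D, r4, r3, r2, r1, r0, hF0, hF1]
    norm_num
    ring
  | succ n ih =>
    have A : S 3 (n + 1) = S 3 n + S 2 (n + 1) := hstep 2 n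
    have B : S 2 (n + 3) = S 2 (n + 2) + S 1 (n + 3) := hstep 1 (n + 2)
    have C : S 2 (n + 1) = S 1 (n + 3) - a - ((n : ℤ) + 1 + 2) * b := h2 (n + 1)
    obtain ⟨c, hc⟩ : Even (((n : ℤ) + 2) * (((n : ℤ) + 2) + 1)) :=
      Int.even_mul_succ_self _
    have h4 : ((n : ℤ) + 1 + 2) * ((n : ℤ) + 1 + 3) = 2 * (c + ((n : ℤ) + 3)) := by
      linear_combination hc
    have h5 : ((n : ℤ) + 2) * ((n : ℤ) + 3) = 2 * c := by linear_combination hc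
    show S 3 (n + 1) = S 2 (n + 3) - ((n : ℤ) + 1 + 3) * a
        - ((((n : ℤ) + 1) + 2) * (((n : ℤ) + 1) + 3) / 2) * b
    rw [A, ih, C, B]
    push_cast
    rw [h4, h5, Int.mul_ediv_cancel_left _ two_ne_zero,
      Int.mul_ediv_cancel_left _ two_ne_zero]
    ring
end

section
/- With S^i F(a,b) the i-th iterated partial sum of the generalized Fibonacci sequence over ℤ, for all i ≥ 1 and n ≥ 0: S^i F(a,b)_n = S^{i-1} F(a,b)_{n+2} - C(n+i, i-2)·a - C(n+i, i-1)·b, where C denotes the binomial coefficient and C(n+1, -1) is interpreted as 0 for i = 1. -/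
theorem stmt_14 (a b : ℤ) (F : ℕ → ℤ)
    (hF0 : F 0 = a) (hF1 : F 1 = b)
    (hrec : ∀ n, F (n + 2) = F (n + 1) + F n)
    (S : ℕ → ℕ → ℤ)
    (hS0 : ∀ n, S 0 n = F n)
    (hS : ∀ i n, S (i + 1) n = ∑ k ∈ Finset.range (n + 1), S i k) :
    ∀ i : ℕ, 1 ≤ i → ∀ n : ℕ,
      S i n = S (i - 1) (n + 2)
        - (if i = 1 then 0 else ((n + i).choose (i - 2) : ℤ)) * a
        - ((n + i).choose (i - 1) : ℤ) * b := by
  have h0 : ∀ i, S i 0 = a := by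
    intro i
    induction i with
    | zero => rw [hS0, hF0]
    | succ i ih => rw [hS]; simpa using ih
  have h1 : ∀ i, S i 1 = i * a + b := by
    intro i
    induction i with
    | zero => rw [hS0, hF1]; push_cast; ring
    | succ i ih =>
      rw [hS, Finset.sum_range_succ, Finset.sum_range_one, h0, ih]
      push_cast; ring
  have shift : ∀ (f : ℕ → ℤ) (n : ℕ),
      ∑ k ∈ Finset.range (n + 2 + 1), f k
        = f 0 + f 1 + ∑ k ∈ Finset.range (n + 1), f (k + 2) := by
    intro f n
    rw [Finset.sum_range_succ', Finset.sum_range_succ']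
    ring
  have hs : ∀ (m r n : ℕ), (∑ k ∈ Finset.range (n + 1), ((k + m).choose r : ℤ))
      = ((n + m + 1).choose (r + 1) : ℤ) - (m.choose (r + 1) : ℤ) := by
    intro m r n
    induction n with
    | zero =>
      rw [Finset.sum_range_one]
      have : (0 + m + 1).choose (r + 1) = m.choose r + m.choose (r + 1) := by
        simpa using Nat.choose_succ_succ m r
      rw [this]; push_cast; ring
    | succ n ih =>
      rw [Finset.sum_range_succ, ih]
      have e1 : n + 1 + m = n + m + 1 := by omega
      rw [e1]
      have : (n + m + 1 + 1).choose (r + 1)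
          = (n + m + 1).choose r + (n + m + 1).choose (r + 1) :=
        Nat.choose_succ_succ _ _
      rw [this]; push_cast; ring
  have fib : ∀ n, ∑ k ∈ Finset.range (n + 1), F k = F (n + 2) - b := by
    intro n
    induction n with
    | zero => rw [Finset.sum_range_one, hrec 0, hF1]; ring
    | succ n ih => rw [Finset.sum_range_succ, ih, hrec (n + 1)]; ring
  intro i hi
  induction i, hi using Nat.le_induction with
  | base =>
    intro n
    rw [hS]
    simp only [hS0, fib]
    simp
  | succ i hi ih =>
    obtain ⟨j, rfl⟩ : ∃ j, i = j + 1 := ⟨i - 1, by omega⟩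
    rcases j with _ | j
    · -- i = 1, prove for 2
      intro n
      have ih' : ∀ k, S 1 k = F (k + 2) - b := by
        intro k
        have := ih k
        simpa [hS0] using this
      rw [hS]
      simp only [ih']
      rw [Finset.sum_sub_distrib, Finset.sum_const, Finset.card_range]
      have hsum : F (n + 2 + 2) - b
          = F 0 + F 1 + ∑ k ∈ Finset.range (n + 1), F (k + 2) :=
        (fib (n + 2)).symm.trans (shift F n)
      rw [hF0, hF1] at hsum
      simp only [Nat.add_sub_cancel, Nat.succ_sub_one]
      norm_num [Nat.choose_one_right]
      linarith [hsum]
    · -- i = j + 2, prove for j + 3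
      intro n
      have ih' : ∀ m, S (j + 2) m
          = S (j + 1) (m + 2) - ((m + (j + 2)).choose j : ℤ) * a
            - ((m + (j + 2)).choose (j + 1) : ℤ) * b := by
        intro m
        have := ih m
        simpa [Nat.add_sub_cancel, Nat.succ_sub_one] using this
      rw [hS]
      simp only [ih']
      rw [Finset.sum_sub_distrib, Finset.sum_sub_distrib, ← Finset.sum_mul,
        ← Finset.sum_mul, hs (j + 2) j n, hs (j + 2) (j + 1) n]
      have hSn2 : S (j + 2) (n + 2)
          = a + ((j + 1 : ℕ) * a + b) + ∑ k ∈ Finset.range (n + 1), S (j + 1) (k + 2) := by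
        rw [hS, shift, h0, h1]
      have e : n + (j + 3) = n + (j + 2) + 1 := by omega
      simp only [Nat.add_sub_cancel, Nat.succ_sub_one, e]
      have c1 : (j + 2).choose (j + 1) = j + 2 := Nat.choose_succ_self_right _
      have c2 : (j + 2).choose (j + 2) = 1 := Nat.choose_self _
      rw [show j + 3 = j + 2 + 1 from rfl] at *
      simp only [show (j + 2 + 1 = 1) = False by simp, if_false]
      rw [hSn2, c1, c2]
      push_cast; ring
end
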